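/- The 3-state automaton on states {q_1,q_2,q_3} with alphabet {a,b}, where a acts as the cycle q_1→q_2→q_3→q_1 and b fixes q_1, sends q_2 to q_1, and sends q_3 to q_1, is synchronizing, and the transition monoid acting on the zero-sum plane in ℂ³ leaves invariant the complex line spanned by v = (e^{2πi/3}, e^{4πi/3}) (in the basis {q_2-q_1, q_3-q_1}), while no nonzero rational vector spans an invariant line. -/

import Mathlib

def wordAct {n : ℕ} {A : Type} (δ : Fin n → A → Fin n) (p : Fin n) (u : List A) : Fin n :=
  u.foldl δ p

noncomputable def relDist {n : ℕ} {A : Type} (δ : Fin n → A → Fin n) (a : A) (p q : Fin n) : ℕ :=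
  sInf {k : ℕ | wordAct δ p (List.replicate k a) = q ∨ wordAct δ q (List.replicate k a) = p}

/-- The cyclic successor `q ↦ q + 1 (mod n)` on `Fin n`. -/
def cyc {n : ℕ} (q : Fin n) : Fin n :=
  ⟨(q.val + 1) % n, Nat.mod_lt _ (by have := q.isLt; omega)⟩

def IsCirculating {n : ℕ} {A : Type} (δ : Fin n → A → Fin n) (a : A) : Prop :=
  ∀ q : Fin n, δ q a = cyc q

def IsContracting {n : ℕ} {A : Type} (δ : Fin n → A → Fin n) (a : A) : Prop :=
  ∀ p q : Fin n, 1 < relDist δ a p q →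
    ∃ u : List A, 1 ≤ relDist δ a (wordAct δ p u) (wordAct δ q u) ∧
      relDist δ a (wordAct δ p u) (wordAct δ q u) < relDist δ a p q

def IsWeaklyContractingPair {n : ℕ} {A : Type} (δ : Fin n → A → Fin n) (a : A) (p q : Fin n) : Prop :=
  ∀ m : ℕ, (∀ u : List A, wordAct δ p u ≠ wordAct δ q u →
      m ∣ Nat.gcd (relDist δ a (wordAct δ p u) (wordAct δ q u)) n) → m = 1

def IsWeaklyContracting {n : ℕ} {A : Type} (δ : Fin n → A → Fin n) (a : A) : Prop :=
  ∀ p q : Fin n, p ≠ q → IsWeaklyContractingPair δ a p q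

def IsCongruence {n : ℕ} {A : Type} (δ : Fin n → A → Fin n) (σ : Fin n → Fin n → Prop) : Prop :=
  Equivalence σ ∧ ∀ (p q : Fin n) (u : List A), σ p q → σ (wordAct δ p u) (wordAct δ q u)

def IsSimple {n : ℕ} {A : Type} (δ : Fin n → A → Fin n) : Prop :=
  ∀ σ : Fin n → Fin n → Prop, IsCongruence δ σ → (∀ x y, σ x y → x = y) ∨ (∀ x y, σ x y)

def IsSynchronizing {n : ℕ} {A : Type} (δ : Fin n → A → Fin n) : Prop :=
  ∃ u : List A, ∀ p q : Fin n, wordAct δ p u = wordAct δ q u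

/-- The linear action of a word on `K`-linear combinations of states. -/
def actVec {n : ℕ} {A : Type} {K : Type} [Semiring K]
    (δ : Fin n → A → Fin n) (v : Fin n → K) (u : List A) : Fin n → K :=
  fun j => ∑ i, if wordAct δ i u = j then v i else 0

/-- The 3-state automaton: `true` (= `a`) is the 3-cycle, `false` (= `b`)
sends every state to the first state. -/
def delta18 : Fin 3 → Bool → Fin 3 := fun q x => if x then q + 1 else 0

/-- The vector of `ℂQ` corresponding to `(e^{2πi/3}, e^{4πi/3})` in the basis
`{q_2 - q_1, q_3 - q_1}` of the zero-sum plane. -/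
noncomputable def w18 : Fin 3 → ℂ :=
  ![-(Complex.exp (2 * Real.pi * Complex.I / 3) + Complex.exp (4 * Real.pi * Complex.I / 3)),
    Complex.exp (2 * Real.pi * Complex.I / 3),
    Complex.exp (4 * Real.pi * Complex.I / 3)]


lemma actVec_nil' {n : ℕ} {A K : Type} [Semiring K] (δ : Fin n → A → Fin n) (v : Fin n → K) :
    actVec δ v ([] : List A) = v := by
  funext j
  unfold actVec wordAct
  rw [Finset.sum_eq_single (f := fun i => if List.foldl δ i [] = j then v i else 0) j
    (fun b _ hb => if_neg hb) (fun h => absurd (Finset.mem_univ j) h)]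
  exact if_pos rfl

lemma actVec_smul' {n : ℕ} {A K : Type} [CommSemiring K] (δ : Fin n → A → Fin n)
    (c : K) (v : Fin n → K) (u : List A) :
    actVec δ (c • v) u = c • actVec δ v u := by
  funext j
  simp [actVec, Finset.mul_sum, mul_ite]

lemma actVec_comp' {n : ℕ} {A K : Type} [Semiring K] (δ : Fin n → A → Fin n)
    (v : Fin n → K) (u₁ u₂ : List A) :
    actVec δ v (u₁ ++ u₂) = actVec δ (actVec δ v u₁) u₂ := by
  funext j
  unfold actVec wordAct
  simp only [List.foldl_append]
  have : ∀ k : Fin n, (if List.foldl δ k u₂ = j then ∑ i : Fin n, (if List.foldl δ i u₁ = k then v i else 0) else 0)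
      = ∑ i : Fin n, if List.foldl δ i u₁ = k then (if List.foldl δ k u₂ = j then v i else 0) else 0 := by
    intro k
    split
    · apply Finset.sum_congr rfl; intro i _; split <;> simp_all
    · simp_all
  rw [Finset.sum_congr rfl (fun k _ => this k), Finset.sum_comm]
  apply Finset.sum_congr rfl
  intro i _
  rw [Finset.sum_ite_eq Finset.univ (List.foldl δ i u₁)
      (fun k => if List.foldl δ k u₂ = j then v i else 0)]
  simp

lemma hB18 : Complex.exp (4 * Real.pi * Complex.I / 3)
    = Complex.exp (2 * Real.pi * Complex.I / 3) ^ 2 := by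
  rw [sq, ← Complex.exp_add]
  ring_nf

lemma hA3 : Complex.exp (2 * Real.pi * Complex.I / 3) ^ 3 = 1 := by
  rw [← Complex.exp_nat_mul]
  rw [show ((3 : ℕ) : ℂ) * (2 * Real.pi * Complex.I / 3) = 2 * Real.pi * Complex.I by
    push_cast; ring]
  exact Complex.exp_two_pi_mul_I

lemma hAsum : 1 + Complex.exp (2 * Real.pi * Complex.I / 3)
    + Complex.exp (2 * Real.pi * Complex.I / 3) ^ 2 = 0 := by
  have h := Complex.isPrimitiveRoot_exp 3 (by norm_num)
  have h1 : Complex.exp (2 * Real.pi * Complex.I / 3) ≠ 1 := by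
    intro hc
    have := h.pow_ne_one_of_pos_of_lt (l := 1) one_ne_zero (by norm_num)
    simp [hc] at this
  have h0 : (Complex.exp (2 * Real.pi * Complex.I / 3) - 1) *
      (1 + Complex.exp (2 * Real.pi * Complex.I / 3)
        + Complex.exp (2 * Real.pi * Complex.I / 3) ^ 2) = 0 := by
    have := hA3
    linear_combination this
  rcases mul_eq_zero.mp h0 with h | h
  · exact absurd (by linear_combination h) h1
  · exact h

lemma act_b : actVec delta18 w18 [false] = (0 : ℂ) • w18 := by
  funext j
  fin_cases j <;>
    simp [actVec, wordAct, delta18, Fin.sum_univ_three, w18] <;> ring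

lemma act_a : actVec delta18 w18 [true]
    = (Complex.exp (2 * Real.pi * Complex.I / 3) ^ 2) • w18 := by
  have h3 := hA3
  have hs := hAsum
  funext j
  fin_cases j <;>
    simp [actVec, wordAct, delta18, Fin.sum_univ_three, w18, hB18] <;>
    first
      | linear_combination -hs
      | linear_combination -h3 - hs
      | linear_combination -Complex.exp (2 * Real.pi * Complex.I / 3) * h3
      | linear_combination (1 + Complex.exp (2 * Real.pi * Complex.I / 3)) * h3 + hs

theorem stmt18 :
    IsSynchronizing delta18 ∧
    (∀ u : List Bool, ∃ c : ℂ, actVec delta18 w18 u = c • w18) ∧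
    (∀ r : Fin 3 → ℚ, (∑ i, r i = 0) → r ≠ 0 →
        ¬ ∀ u : List Bool, ∃ c : ℚ, actVec delta18 r u = c • r) := by
  refine ⟨⟨[false], fun p q => by simp [wordAct, delta18]⟩, ?_, ?_⟩
  · intro u
    induction u using List.reverseRecOn with
    | nil => exact ⟨1, by rw [actVec_nil', one_smul]⟩
    | append_singleton u x ih =>
      obtain ⟨c, hc⟩ := ih
      rw [actVec_comp', hc, actVec_smul']
      cases x
      · exact ⟨c * 0, by rw [act_b, smul_smul]⟩
      · exact ⟨c * Complex.exp (2 * Real.pi * Complex.I / 3) ^ 2, by rw [act_a, smul_smul]⟩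
  · intro r hsum hr hinv
    obtain ⟨c, hc⟩ := hinv [true]
    have h0 := congrFun hc 0
    have h1 := congrFun hc 1
    have h2 := congrFun hc 2
    simp [actVec, wordAct, delta18, Fin.sum_univ_three,
      Pi.smul_apply, smul_eq_mul] at h0 h1 h2
    rw [Fin.sum_univ_three] at hsum
    by_cases hz : r 0 = 0
    · apply hr
      have e2 : r 2 = 0 := by rw [h0, hz, mul_zero]
      have e1 : r 1 = 0 := by linarith
      funext i
      fin_cases i <;> simp only [Pi.zero_apply] <;> [exact hz; exact e1; exact e2]
    · have hc3 : (c ^ 3 - 1) * r 0 = 0 := by linear_combination (-1) * h1 - c * h2 - c ^ 2 * h0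
      have hc3' : c ^ 3 = 1 := by
        rcases mul_eq_zero.mp hc3 with h | h
        · linarith [h]
        · exact absurd h hz
      have hcone : c = 1 := by
        have : (c - 1) * (c ^ 2 + c + 1) = 0 := by linear_combination hc3'
        rcases mul_eq_zero.mp this with h | h
        · linarith
        · nlinarith [sq_nonneg (2 * c + 1)]
      rw [hcone, one_mul] at h0 h1 h2
      apply hz
      linarith
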